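/- The Mellin–Jackson kernel J_{γ,β}(x) := d_{γ,β} sinc^{2β}((log x)/(2γβπ)) (c = 0, β ∈ ℕ, γ ≥ 1, d_{γ,β} the normalization making ∫₀^∞ J_{γ,β}(u) du/u = 1) satisfies: J_{γ,β} ∈ X₀, ‖J_{γ,β}‖_{X₀} = 1, and its Mellin transform [J_{γ,β}]^∧_M(iv) vanishes for |v| ≥ 1/γ, i.e. J_{γ,β} is Mellin band-limited to [−1/γ, 1/γ]. -/

import Mathlib

open Real

/-- `sinc u = sin(πu)/(πu)`, `sinc 0 = 1`. -/
noncomputable def sinc (u : ℝ) : ℝ :=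
  if u = 0 then 1 else Real.sin (π * u) / (π * u)

/-- The Mellin–Jackson kernel (with `c = 0`):
`J_{γ,β}(x) = d sinc^{2β}((log x)/(2γβπ))`. -/
noncomputable def mellinJackson (γ : ℝ) (β : ℕ) (d : ℝ) (x : ℝ) : ℝ :=
  d * _root_.sinc (Real.log x / (2 * γ * β * π)) ^ (2 * β)

open MeasureTheory Set Filter

noncomputable def csinc (z : ℂ) : ℂ :=
  if z = 0 then 1 else Complex.sin ((π : ℂ) * z) / ((π : ℂ) * z)

lemma measurable_sinc : Measurable _root_.sinc := by
  unfold _root_.sinc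
  exact Measurable.ite (measurableSet_eq) measurable_const
    ((Real.measurable_sin.comp (measurable_id.const_mul π)).div (measurable_id.const_mul π))

lemma sinc_neg (x : ℝ) : _root_.sinc (-x) = _root_.sinc x := by
  unfold _root_.sinc
  rcases eq_or_ne x 0 with rfl | hx
  · simp
  · rw [if_neg (neg_ne_zero.mpr hx), if_neg hx, mul_neg, Real.sin_neg, neg_div_neg_eq]

lemma abs_sinc_le_one (x : ℝ) : |_root_.sinc x| ≤ 1 := by
  unfold _root_.sinc
  rcases eq_or_ne x 0 with rfl | hx
  · simp
  · rw [if_neg hx, abs_div]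
    exact div_le_one_of_le₀ (Real.abs_sin_le_abs) (abs_nonneg _)

lemma abs_sinc_le (x : ℝ) (hx : x ≠ 0) : |_root_.sinc x| ≤ (π * |x|)⁻¹ := by
  unfold _root_.sinc
  rw [if_neg hx, abs_div, abs_mul, abs_of_pos Real.pi_pos, div_eq_mul_inv]
  exact mul_le_of_le_one_left (by positivity) (Real.abs_sin_le_one _)

lemma sinc_pow_eq (β : ℕ) (t : ℝ) : _root_.sinc t ^ (2 * β) = |_root_.sinc t| ^ (2 * β) := by
  rw [pow_abs, abs_of_nonneg (by rw [pow_mul]; positivity)]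

lemma integrable_abs_sinc_pow {β : ℕ} (hβ : 1 ≤ β) :
    Integrable (fun t : ℝ => |_root_.sinc t| ^ (2 * β)) := by
  have hmeas : Measurable fun t : ℝ => |_root_.sinc t| ^ (2 * β) := _root_.measurable_sinc.abs.pow_const _
  have hIoi : IntegrableOn (fun t : ℝ => |_root_.sinc t| ^ (2 * β)) (Set.Ioi 1) := by
    refine Integrable.mono' (g := fun t : ℝ => t ^ (-2 : ℝ))
      (integrableOn_Ioi_rpow_of_lt (by norm_num) one_pos)
      hmeas.aestronglyMeasurable.restrict ?_
    filter_upwards [MeasureTheory.ae_restrict_mem measurableSet_Ioi] with t ht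
    have ht0 : (0:ℝ) < t := lt_trans one_pos ht
    rw [Real.norm_eq_abs, abs_of_nonneg (by positivity)]
    have h1 : |_root_.sinc t| ≤ t⁻¹ := by
      refine (_root_.abs_sinc_le t ht0.ne').trans ?_
      rw [abs_of_pos ht0]
      exact inv_anti₀ ht0 (le_mul_of_one_le_left ht0.le (by linarith [Real.pi_gt_three]))
    have h2 : t ^ (-2 : ℝ) = (t⁻¹) ^ 2 := by
      rw [show (-2:ℝ) = -((2:ℕ):ℝ) by norm_num, Real.rpow_neg ht0.le, Real.rpow_natCast, inv_pow]
    calc |_root_.sinc t| ^ (2 * β) ≤ |_root_.sinc t| ^ 2 :=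
          pow_le_pow_of_le_one (abs_nonneg _) (_root_.abs_sinc_le_one t) (by omega)
      _ ≤ (t⁻¹) ^ 2 := by gcongr
      _ = t ^ (-2:ℝ) := h2.symm
  have hIio : IntegrableOn (fun t : ℝ => |_root_.sinc t| ^ (2 * β)) (Set.Iio (-1)) := by
    rw [← (Measure.measurePreserving_neg (volume : Measure ℝ)).integrableOn_comp_preimage
        (Homeomorph.neg ℝ).measurableEmbedding]
    simp only [Function.comp_def, _root_.sinc_neg, Set.neg_preimage, Set.neg_Iio, neg_neg]
    exact hIoi
  have hIcc : IntegrableOn (fun t : ℝ => |_root_.sinc t| ^ (2 * β)) (Set.Icc (-1) 1) := by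
    refine Measure.integrableOn_of_bounded (M := 1) (by simp [Real.volume_Icc]) 
      hmeas.aestronglyMeasurable ?_
    filter_upwards with t
    rw [Real.norm_eq_abs, abs_of_nonneg (by positivity)]
    exact pow_le_one₀ (abs_nonneg _) (_root_.abs_sinc_le_one t)
  have huniv : (Set.univ : Set ℝ) = Set.Iio (-1) ∪ (Set.Icc (-1) 1 ∪ Set.Ioi 1) := by
    ext x
    simp only [Set.mem_univ, Set.mem_union, Set.mem_Iio, Set.mem_Icc, Set.mem_Ioi, true_iff]
    rcases lt_or_ge x (-1) with h | h
    · exact Or.inl h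
    · rcases le_or_gt x 1 with h2 | h2
      · exact Or.inr (Or.inl ⟨h, h2⟩)
      · exact Or.inr (Or.inr h2)
  rw [← integrableOn_univ, huniv, integrableOn_union, integrableOn_union]
  exact ⟨hIio, hIcc, hIoi⟩
lemma csinc_ofReal (x : ℝ) : csinc (x : ℂ) = (_root_.sinc x : ℂ) := by
  unfold csinc _root_.sinc
  rcases eq_or_ne x 0 with rfl | hx
  · simp
  · rw [if_neg (by exact_mod_cast hx), if_neg hx]
    push_cast
    rfl

lemma differentiable_csinc : Differentiable ℂ csinc := by
  have hf : Differentiable ℂ (fun z : ℂ => Complex.sin ((π : ℂ) * z) / (π : ℂ)) :=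
    (Complex.differentiable_sin.comp ((differentiable_id.const_mul _))).div_const _
  have hderiv : HasDerivAt (fun z : ℂ => Complex.sin ((π : ℂ) * z) / (π : ℂ)) 1 0 := by
    have h1 : HasDerivAt (fun z : ℂ => Complex.sin ((π : ℂ) * z))
        (Complex.cos ((π : ℂ) * 0) * ((π : ℂ) * 1)) 0 :=
      (Complex.hasDerivAt_sin _).comp 0 ((hasDerivAt_id 0).const_mul _)
    have := h1.div_const (π : ℂ)
    have hπ : (π : ℂ) ≠ 0 := by exact_mod_cast Real.pi_ne_zero
    simpa [hπ, mul_comm, Complex.cos_zero, mul_div_assoc] using this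
  have hkey : csinc = dslope (fun z : ℂ => Complex.sin ((π : ℂ) * z) / (π : ℂ)) 0 := by
    funext z
    rcases eq_or_ne z 0 with rfl | hz
    · rw [dslope_same, hderiv.deriv]
      simp [csinc]
    · rw [dslope_of_ne _ hz, slope_def_field]
      unfold csinc
      rw [if_neg hz]
      field_simp
      simp only [sub_zero, mul_zero, Complex.sin_zero]; ring
  rw [hkey, ← differentiableOn_univ]
  rw [Complex.differentiableOn_dslope (Filter.univ_mem)]
  exact hf.differentiableOn

lemma norm_sin_le_exp {w : ℂ} (hw : 0 ≤ w.im) : ‖Complex.sin w‖ ≤ Real.exp w.im := by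
  rw [Complex.sin]
  have h1 : ‖(Complex.exp (-w * Complex.I) - Complex.exp (w * Complex.I)) * Complex.I / 2‖
      = ‖Complex.exp (-w * Complex.I) - Complex.exp (w * Complex.I)‖ / 2 := by
    simp [norm_div, norm_mul]
  rw [h1]
  have h2 : ‖Complex.exp (-w * Complex.I)‖ = Real.exp w.im := by
    rw [Complex.norm_exp]
    congr 1
    simp [Complex.mul_I_re]
  have h3 : ‖Complex.exp (w * Complex.I)‖ = Real.exp (-w.im) := by
    rw [Complex.norm_exp]
    congr 1
    simp [Complex.mul_I_re]
  have h4 : Real.exp (-w.im) ≤ Real.exp w.im := Real.exp_le_exp.mpr (by linarith)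
  calc ‖Complex.exp (-w * Complex.I) - Complex.exp (w * Complex.I)‖ / 2
      ≤ (‖Complex.exp (-w * Complex.I)‖ + ‖Complex.exp (w * Complex.I)‖) / 2 := by
        gcongr
        exact norm_sub_le _ _
    _ ≤ Real.exp w.im := by rw [h2, h3]; linarith


lemma norm_csinc_le {z : ℂ} (hz : z ≠ 0) (him : 0 ≤ z.im) :
    ‖csinc z‖ ≤ Real.exp (π * z.im) / (π * ‖z‖) := by
  unfold csinc
  rw [if_neg hz, norm_div]
  have hden : ‖(π : ℂ) * z‖ = π * ‖z‖ := by
    rw [norm_mul, Complex.norm_real, Real.norm_eq_abs,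
      abs_of_pos Real.pi_pos]
  rw [hden]
  have himpi : ((π : ℂ) * z).im = π * z.im := by simp [Complex.mul_im]
  have hsin := norm_sin_le_exp (w := (π : ℂ) * z) (by rw [himpi]; positivity)
  rw [himpi] at hsin
  gcongr

lemma norm_h_le {β : ℕ} {ω : ℝ} (hω : 2 * π * β ≤ ω) {R : ℝ} (hR : 0 < R) {z : ℂ}
    (him : 0 ≤ z.im) (habs : R ≤ ‖z‖) :
    ‖Complex.exp (Complex.I * ω * z) * csinc z ^ (2 * β)‖ ≤ ((π * R) ^ (2 * β))⁻¹ := by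
  have hz : z ≠ 0 := by
    intro h
    rw [h] at habs
    simp only [norm_zero] at habs
    linarith
  have hzpos : 0 < ‖z‖ := lt_of_lt_of_le hR habs
  rw [norm_mul, norm_pow]
  have h1 : ‖Complex.exp (Complex.I * ω * z)‖ = Real.exp (-(ω * z.im)) := by
    rw [Complex.norm_exp]
    congr 1
    simp [Complex.mul_re, Complex.mul_im]
  have h2 := norm_csinc_le hz him
  calc ‖Complex.exp (Complex.I * ω * z)‖ * ‖csinc z‖ ^ (2 * β)
      ≤ Real.exp (-(ω * z.im)) * (Real.exp (π * z.im) / (π * ‖z‖)) ^ (2 * β) := by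
        rw [h1]; gcongr
    _ = Real.exp ((2 * π * β - ω) * z.im) * ((π * ‖z‖) ^ (2 * β))⁻¹ := by
        rw [div_pow, ← Real.exp_nat_mul, div_eq_mul_inv, ← mul_assoc, ← Real.exp_add]
        congr 2
        push_cast
        ring
    _ ≤ 1 * ((π * R) ^ (2 * β))⁻¹ := by
        gcongr
        · exact Real.exp_le_one_iff.mpr (mul_nonpos_of_nonpos_of_nonneg (by linarith) him)
    _ = ((π * R) ^ (2 * β))⁻¹ := one_mul _

lemma fourier_sinc_pow_zero_of_nonneg {β : ℕ} (hβ : 1 ≤ β) {ω : ℝ} (hω : 2 * π * β ≤ ω) :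
    ∫ t : ℝ, Complex.exp (Complex.I * ω * t) * (_root_.sinc t : ℂ) ^ (2 * β) = 0 := by
  classical
  set h : ℂ → ℂ := fun z => Complex.exp (Complex.I * ω * z) * csinc z ^ (2 * β) with hhdef
  have hπ := Real.pi_pos
  have hωpos : 0 < ω := lt_of_lt_of_le (by positivity) hω
  have hdiff : Differentiable ℂ h :=
    ((Complex.differentiable_exp.comp ((differentiable_id.const_mul _)))).mul
      (differentiable_csinc.pow _)
  -- the restriction of h to ℝ
  have hre : ∀ x : ℝ, h x = Complex.exp (Complex.I * ω * x) * (_root_.sinc x : ℂ) ^ (2 * β) := by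
    intro x
    rw [hhdef]
    simp only [csinc_ofReal]
  -- integrability on ℝ
  have hmeas : AEStronglyMeasurable (fun x : ℝ => h x) volume := by
    simp only [hre]
    exact ((Complex.continuous_exp.comp
      (continuous_const.mul Complex.continuous_ofReal)).measurable.mul
      ((Complex.measurable_ofReal.comp _root_.measurable_sinc).pow_const _)).aestronglyMeasurable
  have hint : Integrable (fun x : ℝ => h x) := by
    refine Integrable.mono' (integrable_abs_sinc_pow hβ) hmeas ?_
    filter_upwards with x
    rw [hre x, norm_mul, norm_pow]
    have he : ‖Complex.exp (Complex.I * ω * x)‖ = 1 := by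
      rw [Complex.norm_exp]
      simp [Complex.mul_re, Complex.mul_im]
    rw [he, one_mul, Complex.norm_real, Real.norm_eq_abs]
  have key : ∀ R : ℝ, 1 ≤ R → ‖∫ x in (-R : ℝ)..R, h x‖ ≤ 4 * (π ^ (2 * β))⁻¹ * R⁻¹ := by
    intro R hR
    have hR0 : (0:ℝ) < R := lt_of_lt_of_le one_pos hR
    have hrect := Complex.integral_boundary_rect_eq_zero_of_differentiableOn h
      (((-R : ℝ) : ℂ)) (((R : ℝ) : ℂ) + (R : ℝ) * Complex.I) (hdiff.differentiableOn)
    simp only [Complex.add_re, Complex.ofReal_re, Complex.mul_re, Complex.I_re, Complex.I_im,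
      Complex.ofReal_im, Complex.add_im, Complex.mul_im, mul_zero, mul_one, zero_mul, sub_zero,
      add_zero, zero_add, zero_sub, neg_zero, Complex.ofReal_zero, Complex.ofReal_neg,
      Complex.neg_re, Complex.neg_im, zero_mul] at hrect
    set M : ℝ := ((π * R) ^ (2 * β))⁻¹ with hM
    have hB : ‖∫ x in (-R : ℝ)..R, h (↑x + ↑R * Complex.I)‖ ≤ M * |R - (-R)| := by
      apply intervalIntegral.norm_integral_le_of_norm_le_const
      intro x hx
      apply norm_h_le hω hR0
      · simpa using hR0.le
      · have := Complex.abs_im_le_norm (↑x + ↑R * Complex.I)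
        simpa [abs_of_pos hR0] using this
    have hC : ‖∫ y in (0 : ℝ)..R, h (↑R + ↑y * Complex.I)‖ ≤ M * |R - 0| := by
      apply intervalIntegral.norm_integral_le_of_norm_le_const
      intro y hy
      rw [Set.uIoc_of_le hR0.le] at hy
      apply norm_h_le hω hR0
      · simpa using hy.1.le
      · have := Complex.abs_re_le_norm (↑R + ↑y * Complex.I)
        simpa [abs_of_pos hR0] using this
    have hD : ‖∫ y in (0 : ℝ)..R, h (-↑R + ↑y * Complex.I)‖ ≤ M * |R - 0| := by
      apply intervalIntegral.norm_integral_le_of_norm_le_const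
      intro y hy
      rw [Set.uIoc_of_le hR0.le] at hy
      apply norm_h_le hω hR0
      · simpa using hy.1.le
      · have := Complex.abs_re_le_norm (-↑R + ↑y * Complex.I)
        simpa [abs_of_pos hR0] using this
    have hA : (∫ x in (-R : ℝ)..R, h ↑x) = (∫ x in (-R : ℝ)..R, h (↑x + ↑R * Complex.I))
        - Complex.I • (∫ y in (0 : ℝ)..R, h (↑R + ↑y * Complex.I))
        + Complex.I • (∫ y in (0 : ℝ)..R, h (-↑R + ↑y * Complex.I)) := by
      linear_combination hrect
    have habs2 : |R - (-R)| = 2 * R := by rw [sub_neg_eq_add, abs_of_pos (by linarith)]; ring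
    have habs0 : |R - 0| = R := by rw [sub_zero, abs_of_pos hR0]
    have hnorm : ‖∫ x in (-R : ℝ)..R, h ↑x‖ ≤ 4 * R * M := by
      rw [hA]
      calc ‖_ - Complex.I • _ + Complex.I • _‖
          ≤ ‖(∫ x in (-R : ℝ)..R, h (↑x + ↑R * Complex.I))
              - Complex.I • (∫ y in (0 : ℝ)..R, h (↑R + ↑y * Complex.I))‖
            + ‖Complex.I • (∫ y in (0 : ℝ)..R, h (-↑R + ↑y * Complex.I))‖ := norm_add_le _ _
        _ ≤ ‖(∫ x in (-R : ℝ)..R, h (↑x + ↑R * Complex.I))‖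
            + ‖Complex.I • (∫ y in (0 : ℝ)..R, h (↑R + ↑y * Complex.I))‖
            + ‖Complex.I • (∫ y in (0 : ℝ)..R, h (-↑R + ↑y * Complex.I))‖ := by
            gcongr
            exact norm_sub_le _ _
        _ ≤ M * |R - (-R)| + M * |R - 0| + M * |R - 0| := by
            rw [norm_smul, norm_smul, Complex.norm_I, one_mul, one_mul]
            gcongr
        _ = 4 * R * M := by rw [habs2, habs0]; ring
    have hRpow : R ^ 2 ≤ R ^ (2 * β) := pow_le_pow_right₀ hR (by omega)
    have h5 : R * ((R : ℝ) ^ (2 * β))⁻¹ ≤ R⁻¹ := by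
      rw [← div_eq_mul_inv, ← one_div, div_le_div_iff₀ (by positivity) hR0]
      rw [one_mul, ← pow_two]
      exact hRpow
    calc ‖∫ x in (-R : ℝ)..R, h ↑x‖ ≤ 4 * R * M := hnorm
      _ = 4 * (π ^ (2 * β))⁻¹ * (R * ((R : ℝ) ^ (2 * β))⁻¹) := by
          rw [hM, mul_pow, mul_inv]; ring
      _ ≤ 4 * (π ^ (2 * β))⁻¹ * R⁻¹ := by gcongr
  -- limits
  have hlim1 : Tendsto (fun R : ℝ => ∫ x in (-R : ℝ)..R, h x) atTop (nhds (∫ x : ℝ, h x)) :=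
    intervalIntegral_tendsto_integral hint tendsto_neg_atTop_atBot tendsto_id
  have hlim2 : Tendsto (fun R : ℝ => ∫ x in (-R : ℝ)..R, h x) atTop (nhds 0) := by
    have hg0 : Tendsto (fun R : ℝ => 4 * (π ^ (2 * β))⁻¹ * R⁻¹) atTop (nhds 0) := by
      rw [show (0:ℝ) = 4 * (π ^ (2 * β))⁻¹ * 0 by ring]
      exact tendsto_inv_atTop_zero.const_mul _
    exact squeeze_zero_norm'
      (by filter_upwards [eventually_ge_atTop (1 : ℝ)] with R hR using key R hR) hg0
  have h0 : (∫ x : ℝ, h x) = 0 := tendsto_nhds_unique hlim1 hlim2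
  rw [← h0]
  apply integral_congr_ae
  filter_upwards with x
  exact (hre x).symm

lemma fourier_sinc_pow_zero {β : ℕ} (hβ : 1 ≤ β) {ω : ℝ} (hω : 2 * π * β ≤ |ω|) :
    ∫ t : ℝ, Complex.exp (Complex.I * ω * t) * (_root_.sinc t : ℂ) ^ (2 * β) = 0 := by
  rcases le_or_gt 0 ω with h | h
  · exact fourier_sinc_pow_zero_of_nonneg hβ (by rwa [abs_of_nonneg h] at hω)
  · have key := fourier_sinc_pow_zero_of_nonneg hβ (ω := -ω) (by rwa [abs_of_neg h] at hω)
    rw [← integral_neg_eq_self (fun t : ℝ =>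
      Complex.exp (Complex.I * ω * t) * (_root_.sinc t : ℂ) ^ (2 * β)) volume]
    rw [← key]
    apply integral_congr_ae
    filter_upwards with t
    rw [_root_.sinc_neg]
    push_cast
    ring_nf

lemma hasDerivAt_exp_mul (c x : ℝ) :
    HasDerivAt (fun t : ℝ => Real.exp (c * t)) (c * Real.exp (c * x)) x := by
  have := (Real.hasDerivAt_exp (c * x)).comp x ((hasDerivAt_id x).const_mul c)
  exact this.congr_deriv (by ring)

lemma image_exp_mul {c : ℝ} (hc : 0 < c) :
    (fun t : ℝ => Real.exp (c * t)) '' Set.univ = Set.Ioi 0 := by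
  ext x
  simp only [Set.image_univ, Set.mem_range, Set.mem_Ioi]
  constructor
  · rintro ⟨t, rfl⟩; exact Real.exp_pos _
  · intro hx
    exact ⟨Real.log x / c, by rw [mul_div_cancel₀ _ hc.ne', Real.exp_log hx]⟩

lemma injOn_exp_mul {c : ℝ} (hc : 0 < c) :
    Set.InjOn (fun t : ℝ => Real.exp (c * t)) Set.univ :=
  ((Real.exp_injective.comp (mul_right_injective₀ hc.ne'))).injOn

lemma integral_Ioi_cov {E : Type*} [NormedAddCommGroup E] [NormedSpace ℝ E] {c : ℝ}
    (hc : 0 < c) (F : ℝ → E) :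
    ∫ u in Set.Ioi (0:ℝ), F u = ∫ t : ℝ, (c * Real.exp (c * t)) • F (Real.exp (c * t)) := by
  rw [← image_exp_mul hc,
    integral_image_eq_integral_abs_deriv_smul MeasurableSet.univ
      (fun x _ => (hasDerivAt_exp_mul c x).hasDerivWithinAt) (injOn_exp_mul hc) F,
    setIntegral_univ]
  simp only [abs_mul, abs_of_pos hc, Real.abs_exp]

lemma integrableOn_Ioi_cov {E : Type*} [NormedAddCommGroup E] [NormedSpace ℝ E] {c : ℝ}
    (hc : 0 < c) (F : ℝ → E) :
    MeasureTheory.IntegrableOn F (Set.Ioi (0:ℝ)) ↔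
      MeasureTheory.Integrable (fun t : ℝ => (c * Real.exp (c * t)) • F (Real.exp (c * t))) := by
  rw [← image_exp_mul hc,
    integrableOn_image_iff_integrableOn_abs_deriv_smul MeasurableSet.univ
      (fun x _ => (hasDerivAt_exp_mul c x).hasDerivWithinAt) (injOn_exp_mul hc) F,
    integrableOn_univ]
  constructor <;> intro hh <;> [skip; skip] <;>
    · apply hh.congr
      filter_upwards with t
      simp only [abs_mul, abs_of_pos hc, Real.abs_exp]

/-- The Mellin–Jackson kernel belongs to `X₀` with `‖J_{γ,β}‖_{X₀} = 1`, and is Mellin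
band-limited to `[-1/γ, 1/γ]`. -/
theorem mellinJackson_bandlimited
    (γ : ℝ) (hγ : 1 ≤ γ) (β : ℕ) (hβ : 1 ≤ β) (d : ℝ)
    (hd : d⁻¹ = ∫ u in Set.Ioi (0:ℝ), _root_.sinc (Real.log u / (2 * γ * β * π)) ^ (2 * β) / u) :
    MeasureTheory.IntegrableOn
      (fun u : ℝ => |mellinJackson γ β d u| / u) (Set.Ioi (0:ℝ)) ∧
    (∫ u in Set.Ioi (0:ℝ), |mellinJackson γ β d u| / u) = 1 ∧
    ∀ v : ℝ, 1 / γ ≤ |v| →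
      ∫ u in Set.Ioi (0:ℝ),
        (u : ℂ) ^ (Complex.I * v - 1) * (mellinJackson γ β d u : ℂ) = 0 := by
  have hπ := Real.pi_pos
  have hβpos : (0:ℝ) < (β:ℝ) := by exact_mod_cast Nat.lt_of_lt_of_le Nat.zero_lt_one hβ
  have hγ0 : (0:ℝ) < γ := lt_of_lt_of_le one_pos hγ
  set c : ℝ := 2 * γ * (β:ℝ) * π with hcdef
  have hc : 0 < c := by positivity
  have hg : Integrable (fun t : ℝ => _root_.sinc t ^ (2 * β)) := by
    apply (integrable_abs_sinc_pow hβ).congr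
    filter_upwards with t using (sinc_pow_eq β t).symm
  have hdc : d⁻¹ = c * ∫ t : ℝ, _root_.sinc t ^ (2 * β) := by
    rw [hd, integral_Ioi_cov hc (fun u => _root_.sinc (Real.log u / c) ^ (2 * β) / u),
      ← MeasureTheory.integral_const_mul]
    apply integral_congr_ae
    filter_upwards with t
    rw [smul_eq_mul, Real.log_exp, mul_div_cancel_left₀ _ hc.ne']
    field_simp
  have hIpos : 0 < ∫ t : ℝ, _root_.sinc t ^ (2 * β) := by
    rw [integral_pos_iff_support_of_nonneg (fun t => by rw [pow_mul]; positivity) hg]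
    have hsub : Set.Ioo (0:ℝ) (1/2) ⊆ Function.support (fun t : ℝ => _root_.sinc t ^ (2 * β)) := by
      intro t ht
      have h1 : 0 < _root_.sinc t := by
        unfold _root_.sinc
        rw [if_neg ht.1.ne']
        apply div_pos
        · apply Real.sin_pos_of_pos_of_lt_pi (mul_pos hπ ht.1)
          have : π * t < π * 1 := by
            apply mul_lt_mul_of_pos_left _ hπ
            linarith [ht.2]
          linarith
        · exact mul_pos hπ ht.1
      exact pow_ne_zero _ h1.ne'
    calc (0 : ENNReal) < MeasureTheory.volume (Set.Ioo (0:ℝ) (1/2)) := by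
          rw [Real.volume_Ioo]; norm_num
      _ ≤ _ := measure_mono hsub
  have hd1 : 0 < d⁻¹ := by rw [hdc]; positivity
  have hdpos : 0 < d := inv_pos.mp hd1
  have habs : (fun u : ℝ => |mellinJackson γ β d u| / u)
      = fun u => (d * _root_.sinc (Real.log u / c) ^ (2 * β)) / u := by
    funext u
    unfold mellinJackson
    rw [← hcdef, abs_of_nonneg (mul_nonneg hdpos.le (by rw [pow_mul]; positivity))]
  have heq : (fun t : ℝ => (c * Real.exp (c * t)) •
        ((d * _root_.sinc (Real.log (Real.exp (c * t)) / c) ^ (2 * β)) / Real.exp (c * t)))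
      = fun t => (c * d) * _root_.sinc t ^ (2 * β) := by
    funext t
    rw [smul_eq_mul, Real.log_exp, mul_div_cancel_left₀ _ hc.ne']
    field_simp
  refine ⟨?_, ?_, ?_⟩
  · rw [habs, integrableOn_Ioi_cov hc, heq]
    exact hg.const_mul _
  · rw [habs, integral_Ioi_cov hc
      (fun u => (d * _root_.sinc (Real.log u / c) ^ (2 * β)) / u), heq,
      MeasureTheory.integral_const_mul]
    have h2 : c * d * ∫ t : ℝ, _root_.sinc t ^ (2 * β) = d * d⁻¹ := by rw [hdc]; ring
    rw [h2, mul_inv_cancel₀ hdpos.ne']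
  · intro v hv
    rw [integral_Ioi_cov hc
      (fun u => (u : ℂ) ^ (Complex.I * v - 1) * (mellinJackson γ β d u : ℂ))]
    have hcalc : ∀ t : ℝ, (c * Real.exp (c * t)) •
          (((Real.exp (c * t) : ℝ) : ℂ) ^ (Complex.I * v - 1)
            * ((mellinJackson γ β d (Real.exp (c * t)) : ℝ) : ℂ))
        = ((c * d : ℝ) : ℂ)
            * (Complex.exp (Complex.I * (v * c) * t) * ((_root_.sinc t : ℝ) : ℂ) ^ (2 * β)) := by
      intro t
      have hexp0 : ((Real.exp (c * t) : ℝ) : ℂ) ≠ 0 := by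
        exact_mod_cast (Real.exp_pos (c * t)).ne'
      have hcpow : ((Real.exp (c * t) : ℝ) : ℂ) ^ (Complex.I * v - 1)
          = Complex.exp (Complex.I * (v * c) * t) * (((Real.exp (c * t) : ℝ) : ℂ))⁻¹ := by
        rw [Complex.cpow_def_of_ne_zero hexp0, ← Complex.ofReal_log (Real.exp_pos _).le,
          Real.log_exp, Complex.ofReal_exp, ← Complex.exp_neg, ← Complex.exp_add]
        congr 1
        push_cast
        ring
      unfold mellinJackson
      rw [← hcdef, Real.log_exp, mul_div_cancel_left₀ _ hc.ne', hcpow, Complex.real_smul]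
      push_cast
      field_simp
    simp only [hcalc, ← Complex.ofReal_mul]
    rw [MeasureTheory.integral_const_mul, fourier_sinc_pow_zero hβ ?_, mul_zero]
    have habsvc : |v * c| = |v| * c := by rw [abs_mul, abs_of_pos hc]
    rw [habsvc]
    calc 2 * π * (β:ℝ) = (1/γ) * c := by field_simp; ring
      _ ≤ |v| * c := by gcongr
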